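/- Let X be a second countable, locally compact Hausdorff space, Y ⊆ X a closed subset, and A a C*-algebra. Let p : Y → A be a continuous function such that p(x) is a projection for all x ∈ Y and p(x) ~ p(y) (Murray–von Neumann) for all x, y ∈ Y. Then there exist an open set U with Y ⊆ U ⊆ X and a continuous function p̃ : U → A such that p̃(x) = p(x) for all x ∈ Y, p̃(x) is a projection for all x ∈ U, and p̃(x) ~ p̃(y) for all x, y ∈ U. -/

import Mathlib

/-- A projection in a C*-algebra: a self-adjoint idempotent. -/
def IsProjectionElem {A : Type*} [Mul A] [Star A] (e : A) : Prop :=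
  star e = e ∧ e * e = e

/-- Murray–von Neumann equivalence of projections. -/
def MvNEquiv {A : Type*} [Mul A] [Star A] (e f : A) : Prop :=
  ∃ v, star v * v = e ∧ v * star v = f

open Polynomial Metric


section CStarTools
variable {B : Type*} [CStarAlgebra B] [Nontrivial B]

lemma commute_aeval {a b : B} (hb : Commute b a) (P : ℝ[X]) : Commute b (aeval a P) := by
  induction P using Polynomial.induction_on' with
  | add p q hp hq => rw [map_add]; exact hp.add_right hq
  | monomial n c =>
    rw [Polynomial.aeval_monomial]
    have h1 : Commute b ((algebraMap ℝ B) c) := (Algebra.commutes c b).symm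
    exact h1.mul_right (hb.pow_right n)

lemma cfc_approx_poly (f : ℝ → ℝ) (hf : Continuous f) (M ε : ℝ) (hM : 0 ≤ M) (hε : 0 < ε) :
    ∃ P : ℝ[X], ∀ a : B, IsSelfAdjoint a → ‖a‖ ≤ M → ‖cfc f a - aeval a P‖ ≤ ε := by
  obtain ⟨P, hP⟩ := exists_polynomial_near_of_continuousOn (-M) M f hf.continuousOn ε hε
  refine ⟨P, fun a ha haM => ?_⟩
  have hspec : ∀ x ∈ spectrum ℝ a, x ∈ Set.Icc (-M) M := by
    intro x hx
    have h2 := abs_le.mp ((Real.norm_eq_abs x ▸ spectrum.norm_le_norm_of_mem hx).trans haM)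
    exact ⟨by linarith [h2.1], h2.2⟩
  rw [← cfc_polynomial P a, ← cfc_sub _ _ a]
  refine norm_cfc_le hε.le fun x hx => ?_
  rw [Real.norm_eq_abs, abs_sub_comm]
  exact (hP x (hspec x hx)).le

lemma continuous_cfc_comp {W : Type*} [TopologicalSpace W] (f : ℝ → ℝ) (hf : Continuous f)
    (g : W → B) (hg : Continuous g) (hsa : ∀ w, IsSelfAdjoint (g w)) (M : ℝ) (hM0 : 0 ≤ M)
    (hM : ∀ w, ‖g w‖ ≤ M) : Continuous fun w => cfc f (g w) := by
  refine continuous_iff_continuousAt.mpr fun w₀ => ?_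
  rw [ContinuousAt, Metric.tendsto_nhds]
  intro ε hε
  obtain ⟨P, hP⟩ := cfc_approx_poly (B := B) f hf M (ε/4) hM0 (by linarith)
  have hG : Continuous fun w => aeval (g w) P := (P.continuous_aeval).comp hg
  have hG' := Metric.tendsto_nhds.mp (hG.continuousAt (x := w₀)) (ε/4) (by linarith)
  filter_upwards [hG'] with w h3
  have h1 := hP (g w) (hsa w) (hM w)
  have h2 := hP (g w₀) (hsa w₀) (hM w₀)
  calc dist (cfc f (g w)) (cfc f (g w₀))
      ≤ dist (cfc f (g w)) (aeval (g w) P) + dist (aeval (g w) P) (aeval (g w₀) P)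
        + dist (aeval (g w₀) P) (cfc f (g w₀)) := dist_triangle4 _ _ _ _
    _ < ε := by
        rw [dist_eq_norm, dist_eq_norm, dist_eq_norm] at *
        rw [norm_sub_rev] at h2
        linarith

lemma commute_cfc {a b : B} (hb : Commute b a) (ha : IsSelfAdjoint a) (f : ℝ → ℝ)
    (hf : Continuous f) : Commute b (cfc f a) := by
  have key : ∀ n : ℕ, ∃ c : B, Commute b c ∧ ‖cfc f a - c‖ ≤ 1 / (n + 1) := fun n => by
    obtain ⟨P, hP⟩ := cfc_approx_poly (B := B) f hf ‖a‖ (1/(n+1)) (norm_nonneg a) (by positivity)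
    exact ⟨aeval a P, commute_aeval hb P, hP a ha le_rfl⟩
  choose c hc hc' using key
  have hlim : Filter.Tendsto c Filter.atTop (nhds (cfc f a)) := by
    rw [tendsto_iff_norm_sub_tendsto_zero]
    exact squeeze_zero (fun n => norm_nonneg _) (fun n => (norm_sub_rev _ _).le.trans_eq' rfl |>.trans ((norm_sub_rev (cfc f a) (c n)) ▸ hc' n)) tendsto_one_div_add_atTop_nhds_zero_nat
  have h1 : Filter.Tendsto (fun n => b * c n) Filter.atTop (nhds (b * cfc f a)) :=
    (continuous_mul_left b).continuousAt.tendsto.comp hlim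
  have h2 : Filter.Tendsto (fun n => c n * b) Filter.atTop (nhds (cfc f a * b)) :=
    (continuous_mul_right b).continuousAt.tendsto.comp hlim
  have : (fun n => b * c n) = fun n => c n * b := funext fun n => hc n
  rw [this] at h1
  exact tendsto_nhds_unique h1 h2

end CStarTools

section Close
variable {B : Type*} [CStarAlgebra B] [Nontrivial B] [PartialOrder B] [StarOrderedRing B]

lemma key_expand {e f : B} (he : e * e = e) (hf : f * f = f) :
    (e*f + (1-e)*(1-f)) * (f*e + (1-f)*(1-e)) = 1 - (e-f)^2 := by
  have he' : ∀ x : B, e * (e * x) = e * x := fun x => by rw [← mul_assoc, he]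
  have hf' : ∀ x : B, f * (f * x) = f * x := fun x => by rw [← mul_assoc, hf]
  simp only [mul_sub, sub_mul, mul_add, add_mul, mul_one, one_mul, mul_assoc, he, hf, he', hf',
    pow_two]
  abel

lemma close_proj_equiv {e f : B} (he : star e = e ∧ e * e = e) (hf : star f = f ∧ f * f = f)
    (hef : ‖e - f‖ < 1) : ∃ b : B, star (b * e) * (b * e) = e ∧ (b * e) * star (b * e) = f := by
  set z := f * e + (1 - f) * (1 - e) with hz
  have hstarz : star z = e * f + (1 - e) * (1 - f) := by
    simp [hz, star_mul, star_sub, he.1, hf.1]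
  have hzz : star z * z = 1 - (e - f)^2 := by rw [hstarz, hz, key_expand he.2 hf.2]
  have hzz' : z * star z = 1 - (e - f)^2 := by
    rw [hstarz, hz, key_expand hf.2 he.2, ← neg_sub e f, neg_sq]
  set w := 1 - (e - f)^2 with hw
  have hw_nonneg : 0 ≤ w := hzz ▸ star_mul_self_nonneg z
  have hw_sa : IsSelfAdjoint w := .of_nonneg hw_nonneg
  have hnorm : ‖(e - f)^2‖ < 1 := by
    have h1 := norm_mul_le (e - f) (e - f)
    rw [← pow_two] at h1
    nlinarith [norm_nonneg (e - f)]
  have hw_unit : IsUnit w := by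
    exact ⟨Units.oneSub _ hnorm, rfl⟩
  have hcomm_ew : Commute e w := by
    have he' : ∀ x : B, e * (e * x) = e * x := fun x => by rw [← mul_assoc, he.2]
    simp only [Commute, SemiconjBy, hw, mul_sub, sub_mul, mul_one, one_mul, pow_two, mul_add,
      add_mul, sub_sub, mul_assoc, he.2, hf.2, he']
    abel
  have hcomm_zw : Commute z w := by
    show z * w = w * z
    conv_lhs => rw [← hzz, ← mul_assoc, hzz']
  set s := cfc Real.sqrt w with hs
  have hs_sa : IsSelfAdjoint s := cfc_predicate _ _
  have hss : s * s = w := by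
    rw [hs, ← cfc_mul _ _ w (by fun_prop) (by fun_prop)]
    conv_rhs => rw [← cfc_id ℝ w]
    exact cfc_congr fun x hx => Real.mul_self_sqrt (spectrum_nonneg_of_nonneg hw_nonneg hx)
  have hcomm_sw : Commute s w := by
    conv_rhs => rw [← cfc_id ℝ w]
    exact cfc_commute_cfc _ _ _
  set wu := hw_unit.unit with hwu
  have hwuval : (wu : B) = w := rfl
  have hcomm_swi : Commute s ↑wu⁻¹ := hcomm_sw.units_inv_right
  have hs_unit : IsUnit s := by
    refine isUnit_iff_exists.mpr ⟨s * ↑wu⁻¹, ?_, ?_⟩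
    · rw [← mul_assoc, hss, ← hwuval, Units.mul_inv]
    · rw [mul_assoc, ← hcomm_swi.eq, ← mul_assoc, hss, ← hwuval, Units.mul_inv]
  set su := hs_unit.unit with hsu
  have hsuval : (su : B) = s := rfl
  set si : B := ↑su⁻¹ with hsi
  have hsi_mul : si * s = 1 := by rw [hsi, ← hsuval, Units.inv_mul]
  have hmul_si : s * si = 1 := by rw [hsi, ← hsuval, Units.mul_inv]
  have hsisi : si * si = ↑wu⁻¹ := by
    have : si * si * w = 1 := by
      rw [← hss, ← mul_assoc, mul_assoc si si s, hsi_mul, mul_one, hsi_mul]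
    calc si * si = si * si * (w * ↑wu⁻¹) := by rw [← hwuval, Units.mul_inv, mul_one]
      _ = (si * si * w) * ↑wu⁻¹ := by simp only [mul_assoc]
      _ = ↑wu⁻¹ := by rw [this, one_mul]
  have hcomm_es : Commute e s := commute_cfc hcomm_ew hw_sa _ Real.continuous_sqrt
  have hcomm_esi : Commute e si := by
    rw [hsi]
    exact (hsuval ▸ hcomm_es : Commute e ↑su).units_inv_right
  have hstar_si : star si = si := by
    have h1 : star si * s = 1 := by
      rw [← hs_sa, ← star_mul, hmul_si, star_one]
    calc star si = star si * (s * si) := by rw [hmul_si, mul_one]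
      _ = (star si * s) * si := by rw [mul_assoc]
      _ = si := by rw [h1, one_mul]
  have h0e : (1 - e) * e = 0 := by rw [sub_mul, one_mul, he.2, sub_self]
  have h0f : f * (1 - f) = 0 := by rw [mul_sub, mul_one, hf.2, sub_self]
  have hze : z * e = f * z := by
    have h1 : z * e = f * e := by
      rw [hz, add_mul, mul_assoc, he.2, mul_assoc, h0e, mul_zero, add_zero]
    have h2 : f * z = f * e := by
      rw [hz, mul_add, ← mul_assoc, hf.2, ← mul_assoc, h0f, zero_mul, add_zero]
    rw [h1, h2]
  refine ⟨z * si, ?_, ?_⟩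
  · have hstar : star (z * si * e) = e * si * star z := by
      simp [star_mul, he.1, hstar_si, mul_assoc]
    rw [hstar]
    calc e * si * star z * (z * si * e) = e * (si * (star z * z) * si) * e := by
          simp only [mul_assoc]
      _ = e * (si * (s * s) * si) * e := by rw [hzz, ← hss]
      _ = e * e := by rw [← mul_assoc si s s, hsi_mul, one_mul, hmul_si, mul_one]
      _ = e := he.2
  · have hstar : star (z * si * e) = e * si * star z := by
      simp [star_mul, he.1, hstar_si, mul_assoc]
    rw [hstar]
    have hswap : ∀ x : B, si * (e * x) = e * (si * x) := fun x => by
      rw [← mul_assoc, ← hcomm_esi.eq, mul_assoc]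
    have hcomm_zwu : Commute z (wu : B) := by rw [hwuval]; exact hcomm_zw
    have hzwi : ∀ x : B, z * (↑wu⁻¹ * x) = ↑wu⁻¹ * (z * x) := fun x => by
      rw [← mul_assoc, (hcomm_zwu.units_inv_right).eq, mul_assoc]
    calc z * si * e * (e * si * star z) = z * (si * (e * (e * (si * star z)))) := by
          simp only [mul_assoc]
      _ = z * (e * (e * (si * (si * star z)))) := by simp only [hswap]
      _ = z * ((e * e) * ((si * si) * star z)) := by simp only [mul_assoc]
      _ = z * (e * (↑wu⁻¹ * star z)) := by rw [he.2, hsisi]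
      _ = (z * e) * (↑wu⁻¹ * star z) := by simp only [mul_assoc]
      _ = (f * z) * (↑wu⁻¹ * star z) := by rw [hze]
      _ = f * (z * (↑wu⁻¹ * star z)) := by simp only [mul_assoc]
      _ = f * (↑wu⁻¹ * (z * star z)) := by rw [hzwi]
      _ = f := by rw [hzz', ← hwuval, Units.inv_mul, mul_one]
end Close

section NU
variable {A : Type*} [NonUnitalCStarAlgebra A]

noncomputable def projFun : ℝ → ℝ := fun t => min 1 (max 0 (2*t - 2⁻¹))

lemma projFun_continuous : Continuous projFun := by
  unfold projFun; fun_prop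

lemma projFun_zero : projFun 0 = 0 := by norm_num [projFun]

lemma projFun_cases {t : ℝ} (h : |t*t - t| < 3/16) : projFun t = 0 ∧ t < 1/4 ∨
    projFun t = 1 ∧ 3/4 < t := by
  rcases abs_lt.mp h with ⟨h1, h2⟩
  rcases le_or_gt t (1/4) with ht | ht
  · rcases lt_or_ge t (1/4) with ht' | ht'
    · refine Or.inl ⟨?_, ht'⟩
      simp only [projFun]
      rw [max_eq_left (by linarith : 2*t - 2⁻¹ ≤ 0), min_eq_right (by norm_num : (0:ℝ) ≤ 1)]
    · exfalso; have : t = 1/4 := le_antisymm ht ht'; rw [this] at h1 h2; norm_num at h1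
  · refine Or.inr ⟨?_, by nlinarith⟩
    have h3 : (3:ℝ)/4 < t := by nlinarith
    simp only [projFun]
    rw [max_eq_right (by nlinarith), min_eq_left (by nlinarith)]

lemma projFun_near {t : ℝ} (h : |t*t - t| < 3/16) : |projFun t - t| ≤ 1/4 := by
  rcases abs_lt.mp h with ⟨h1, h2⟩
  rcases projFun_cases h with ⟨hp, ht⟩ | ⟨hp, ht⟩
  · rw [hp]; rw [abs_le]; constructor <;> nlinarith
  · rw [hp]; rw [abs_le]; constructor <;> nlinarith

local notation "B" => Unitization ℂ A

lemma inr_selfAdjoint {a : A} (ha : IsSelfAdjoint a) : IsSelfAdjoint (a : B) := by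
  rw [IsSelfAdjoint, ← Unitization.inr_star, ha.star_eq]

lemma spectrum_near_bound {a : A} (ha : IsSelfAdjoint a) {t : ℝ}
    (ht : t ∈ spectrum ℝ (a : B)) : |t*t - t| ≤ ‖a*a - a‖ := by
  have hsa : IsSelfAdjoint (a : B) := inr_selfAdjoint ha
  have hcfc : cfc (fun s : ℝ => s*s - s) (a : B) = (a : B) * (a : B) - (a : B) := by
    rw [cfc_sub _ _ _ (by fun_prop) (by fun_prop), cfc_mul _ _ _ (by fun_prop) (by fun_prop),
      cfc_id' ℝ (a : B)]
  have := norm_apply_le_norm_cfc (fun s : ℝ => s*s - s) (a : B) ht (by fun_prop) hsa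
  rw [hcfc, ← Unitization.inr_mul, ← Unitization.inr_sub, Unitization.norm_inr] at this
  simpa using this

/-- Applying `projFun` to a selfadjoint near-projection yields a projection. -/
lemma projFun_isProjection {a : A} (ha : IsSelfAdjoint a) (hnear : ‖a*a - a‖ < 3/16) :
    IsProjectionElem (cfcₙ projFun a) ∧ ‖cfcₙ projFun a - a‖ ≤ 1/4 := by
  have hsa : IsSelfAdjoint (a : B) := inr_selfAdjoint ha
  have heq : (↑(cfcₙ projFun a) : B) = cfc projFun (a : B) :=
    Unitization.real_cfcₙ_eq_cfc_inr a projFun projFun_zero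
  have hspec : ∀ t ∈ spectrum ℝ (a : B), |t*t - t| < 3/16 :=
    fun t ht => lt_of_le_of_lt (spectrum_near_bound ha ht) hnear
  constructor
  · constructor
    · exact (cfcₙ_predicate projFun a).star_eq
    · apply Unitization.inr_injective (R := ℂ)
      rw [Unitization.inr_mul, heq,
        ← cfc_mul _ _ _ projFun_continuous.continuousOn projFun_continuous.continuousOn]
      apply cfc_congr
      intro t ht
      rcases projFun_cases (hspec t ht) with ⟨hp, _⟩ | ⟨hp, _⟩ <;> simp [hp]
  · have key : cfc (fun t : ℝ => projFun t - t) (a : B) = cfc projFun (a : B) - (a : B) := by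
      rw [cfc_sub _ _ _ projFun_continuous.continuousOn
        (by fun_prop : ContinuousOn (fun t : ℝ => t) (spectrum ℝ (a : B))), cfc_id' ℝ (a : B)]
    have : ‖(↑(cfcₙ projFun a - a) : B)‖ ≤ 1/4 := by
      rw [Unitization.inr_sub, heq, ← key]
      refine norm_cfc_le (by norm_num) fun t ht => ?_
      rw [Real.norm_eq_abs]
      exact projFun_near (hspec t ht)
    rwa [Unitization.norm_inr] at this

lemma projFun_fixes {a : A} (hproj : IsProjectionElem a) : cfcₙ projFun a = a := by
  have ha : IsSelfAdjoint a := hproj.1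
  have hsa : IsSelfAdjoint (a : B) := inr_selfAdjoint ha
  have heq : (↑(cfcₙ projFun a) : B) = cfc projFun (a : B) :=
    Unitization.real_cfcₙ_eq_cfc_inr a projFun projFun_zero
  have hz : ‖a*a - a‖ = 0 := by rw [hproj.2, sub_self, norm_zero]
  apply Unitization.inr_injective (R := ℂ)
  rw [heq]
  conv_rhs => rw [← cfc_id ℝ (a : B)]
  apply cfc_congr
  intro t ht
  have h1 := spectrum_near_bound ha ht
  rw [hz] at h1
  have h2 : t * t - t = 0 := abs_eq_zero.mp (le_antisymm h1 (abs_nonneg _))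
  have : t = 0 ∨ t = 1 := by
    rcases mul_eq_zero.mp (show t * (t - 1) = 0 by nlinarith) with h | h
    · exact Or.inl h
    · exact Or.inr (by linarith)
  rcases this with h | h <;> rw [h] <;> norm_num [projFun]

end NU

section NU2
variable {A : Type*} [NonUnitalCStarAlgebra A]

lemma MvNEquiv.symm {e f : A} (h : MvNEquiv e f) : MvNEquiv f e := by
  obtain ⟨v, h1, h2⟩ := h
  exact ⟨star v, by rwa [star_star], by rwa [star_star]⟩

lemma MvNEquiv.trans {e f g : A} (he : e * e = e) (hg : g * g = g)
    (h1 : MvNEquiv e f) (h2 : MvNEquiv f g) : MvNEquiv e g := by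
  obtain ⟨u, hu1, hu2⟩ := h1
  obtain ⟨v, hv1, hv2⟩ := h2
  refine ⟨v * u, ?_, ?_⟩
  · rw [star_mul]
    calc star u * star v * (v * u) = star u * ((star v * v) * u) := by simp only [mul_assoc]
      _ = star u * ((u * star u) * u) := by rw [hv1, hu2]
      _ = (star u * u) * (star u * u) := by simp only [mul_assoc]
      _ = e := by rw [hu1, he]
  · rw [star_mul]
    calc v * u * (star u * star v) = v * ((u * star u) * star v) := by simp only [mul_assoc]
      _ = v * ((star v * v) * star v) := by rw [hu2, hv1]
      _ = (v * star v) * (v * star v) := by simp only [mul_assoc]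
      _ = g := by rw [hv2, hg]

local notation "B" => Unitization ℂ A

lemma mvn_of_close {e f : A} (he : IsProjectionElem e) (hf : IsProjectionElem f)
    (hef : ‖e - f‖ < 1) : MvNEquiv e f := by
  have heB : star (e : B) = (e : B) ∧ (e : B) * (e : B) = (e : B) := by
    constructor
    · rw [← Unitization.inr_star, he.1]
    · rw [← Unitization.inr_mul, he.2]
  have hfB : star (f : B) = (f : B) ∧ (f : B) * (f : B) = (f : B) := by
    constructor
    · rw [← Unitization.inr_star, hf.1]
    · rw [← Unitization.inr_mul, hf.2]
  have hnorm : ‖(e : B) - (f : B)‖ < 1 := by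
    rw [← Unitization.inr_sub, Unitization.norm_inr]; exact hef
  obtain ⟨b, hb1, hb2⟩ := close_proj_equiv heB hfB hnorm
  set v : B := b * (e : B) with hv
  have hfst : v.fst = 0 := by
    rw [hv, Unitization.fst_mul, Unitization.fst_inr, mul_zero]
  have hvinr : v = (v.snd : B) := by
    conv_lhs => rw [← Unitization.inl_fst_add_inr_snd_eq v]
    rw [hfst, Unitization.inl_zero, zero_add]
  refine ⟨v.snd, ?_, ?_⟩
  · apply Unitization.inr_injective (R := ℂ)
    rw [Unitization.inr_mul, Unitization.inr_star, ← hvinr]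
    exact hb1
  · apply Unitization.inr_injective (R := ℂ)
    rw [Unitization.inr_mul, Unitization.inr_star, ← hvinr]
    exact hb2

end NU2

section Extend
variable {X : Type*} [MetricSpace X] {E : Type*} [NormedAddCommGroup E] [NormedSpace ℝ E]
  [CompleteSpace E]

lemma extend_from_closed (Y : Set X) (hY : IsClosed Y) (hne : Y.Nonempty)
    [TopologicalSpace.SeparableSpace Y] (p : Y → E) (hp : Continuous p)
    (hpb : ∀ y, ‖p y‖ ≤ 1) :
    ∃ q : X → E, Continuous q ∧ (∀ y : Y, q y = p y) ∧ (∀ x, ‖q x‖ ≤ 1) := by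
  haveI : Nonempty Y := hne.to_subtype
  obtain ⟨u, hu⟩ := TopologicalSpace.exists_dense_seq Y
  set ρ : X → ℝ := fun x => infDist x Y with hρ
  have hρc : Continuous ρ := continuous_infDist_pt Y
  set w : ℕ → X → ℝ := fun n x => (2:ℝ)⁻¹^n * min (max (2 * ρ x - dist x (u n)) 0) 1 with hw
  have hw_nonneg : ∀ n x, 0 ≤ w n x := fun n x => by
    apply mul_nonneg (by positivity)
    exact le_min (le_max_right _ _) zero_le_one
  have hw_le : ∀ n x, w n x ≤ (2:ℝ)⁻¹^n := fun n x => by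
    rw [hw]
    calc (2:ℝ)⁻¹^n * min (max (2 * ρ x - dist x (u n)) 0) 1 ≤ (2:ℝ)⁻¹^n * 1 := by
          apply mul_le_mul_of_nonneg_left (min_le_right _ _) (by positivity)
      _ = (2:ℝ)⁻¹^n := mul_one _
  have hgeom : Summable (fun n : ℕ => (2:ℝ)⁻¹^n) :=
    summable_geometric_of_lt_one (by norm_num) (by norm_num)
  have hw_cont : ∀ n, Continuous (fun x => w n x) := fun n => by
    apply Continuous.mul continuous_const
    exact (((continuous_const.mul hρc).sub (continuous_id.dist continuous_const)).max
      continuous_const).min continuous_const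
  have hw_summ : ∀ x, Summable (fun n => w n x) := fun x =>
    Summable.of_nonneg_of_le (fun n => hw_nonneg n x) (fun n => hw_le n x) hgeom
  set W : X → ℝ := fun x => ∑' n, w n x with hW
  have hW_cont : Continuous W := by
    apply continuous_tsum hw_cont hgeom
    intro n x
    rw [Real.norm_eq_abs, abs_of_nonneg (hw_nonneg n x)]
    exact hw_le n x
  -- positivity off Y
  have hW_pos : ∀ x ∉ Y, 0 < W x := by
    intro x hx
    have hρpos : 0 < ρ x := by
      rcases (lt_or_eq_of_le (infDist_nonneg (s := Y) (x := x))).symm with h | h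
      · exact absurd ((hY.mem_iff_infDist_zero hne).mpr h.symm) hx
      · exact h
    obtain ⟨y, hy, hdy⟩ := infDist_lt_iff hne |>.mp
      (by rw [hρ] at hρpos ⊢; linarith : infDist x Y < (3/2) * ρ x)
    obtain ⟨n, hn⟩ := Metric.denseRange_iff.mp hu ⟨y, hy⟩ (ρ x / 2) (by linarith)
    have hdist : dist x (u n) < 2 * ρ x := by
      have h1 : dist (⟨y, hy⟩ : Y) (u n) = dist y (u n : X) := Subtype.dist_eq _ _
      calc dist x (u n : X) ≤ dist x y + dist y (u n : X) := dist_triangle _ _ _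
        _ < 3/2 * ρ x + ρ x / 2 := by
            rw [← h1]
            have := dist_comm (⟨y, hy⟩ : Y) (u n)
            linarith [hn, hdy]
        _ = 2 * ρ x := by ring
    have hwn : 0 < w n x := by
      apply mul_pos (by positivity)
      apply lt_min
      · rw [lt_max_iff]; left; linarith
      · norm_num
    calc (0:ℝ) < w n x := hwn
      _ ≤ W x := Summable.le_tsum (hw_summ x) n (fun i _ => hw_nonneg i x)
  -- if a weight is nonzero the corresponding point is close
  have hclose : ∀ x, ∀ n, w n x ≠ 0 → ∀ y₀ ∈ Y, dist (u n : X) y₀ ≤ 3 * dist x y₀ := by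
    intro x n hn y₀ hy₀
    have h1 : dist x (u n) < 2 * ρ x := by
      by_contra h
      push_neg at h
      apply hn
      rw [hw]
      simp only [mul_eq_zero]
      right
      rw [min_eq_left_iff.mpr, max_eq_right (by linarith)]
      rw [max_eq_right (by linarith)]
      norm_num
    have h2 : ρ x ≤ dist x y₀ := infDist_le_dist_of_mem hy₀
    calc dist (u n : X) y₀ ≤ dist (u n : X) x + dist x y₀ := dist_triangle _ _ _
      _ = dist x (u n : X) + dist x y₀ := by rw [dist_comm]
      _ ≤ 3 * dist x y₀ := by linarith
  -- numerator
  have hterm_norm_summ : ∀ x, Summable (fun n => ‖w n x • p (u n)‖) := fun x => by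
    apply Summable.of_nonneg_of_le (fun n => norm_nonneg _) (fun n => ?_) hgeom
    rw [norm_smul, Real.norm_eq_abs, abs_of_nonneg (hw_nonneg n x)]
    calc w n x * ‖p (u n)‖ ≤ w n x * 1 := by
          exact mul_le_mul_of_nonneg_left (hpb _) (hw_nonneg n x)
      _ ≤ (2:ℝ)⁻¹^n := by rw [mul_one]; exact hw_le n x
  have hterm_summ : ∀ x, Summable (fun n => w n x • p (u n)) := fun x =>
    (hterm_norm_summ x).of_norm
  set N : X → E := fun x => ∑' n, w n x • p (u n) with hN
  have hN_cont : Continuous N := by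
    apply continuous_tsum (fun n => (hw_cont n).smul continuous_const) hgeom
    intro n x
    show ‖w n x • p (u n)‖ ≤ (2:ℝ)⁻¹^n
    rw [norm_smul, Real.norm_eq_abs, abs_of_nonneg (hw_nonneg n x)]
    calc w n x * ‖p (u n)‖ ≤ w n x * 1 :=
          mul_le_mul_of_nonneg_left (hpb _) (hw_nonneg n x)
      _ ≤ (2:ℝ)⁻¹^n := by rw [mul_one]; exact hw_le n x
  classical
  set q : X → E := fun x => if hx : x ∈ Y then p ⟨x, hx⟩ else (W x)⁻¹ • N x with hq
  have hq_ext : ∀ y : Y, q y = p y := fun y => by rw [hq]; simp [y.2]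
  have hq_boundary : ∀ (x : X), x ∉ Y → ∀ y₀ : Y, ‖q x - p y₀‖ ≤
      (W x)⁻¹ * ∑' n, w n x * ‖p (u n) - p y₀‖ := by
    intro x hx y₀
    have hqx : q x = (W x)⁻¹ • N x := by rw [hq]; simp [hx]
    have hWx := hW_pos x hx
    have hsummul : Summable (fun n => w n x * ‖p (u n) - p y₀‖) := by
      apply Summable.of_nonneg_of_le (fun n => mul_nonneg (hw_nonneg n x) (norm_nonneg _))
        (fun n => ?_) (hgeom.mul_left 2)
      calc w n x * ‖p (u n) - p y₀‖ ≤ w n x * 2 := by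
            apply mul_le_mul_of_nonneg_left ?_ (hw_nonneg n x)
            calc ‖p (u n) - p y₀‖ ≤ ‖p (u n)‖ + ‖p y₀‖ := norm_sub_le _ _
              _ ≤ 2 := by linarith [hpb (u n), hpb y₀]
        _ ≤ 2 * (2:ℝ)⁻¹^n := by rw [mul_comm]; exact mul_le_mul_of_nonneg_left (hw_le n x) (by norm_num)
    have key : q x - p y₀ = (W x)⁻¹ • ∑' n, w n x • (p (u n) - p y₀) := by
      rw [hqx]
      have h1 : ∑' n, w n x • (p (u n) - p y₀) = N x - W x • p y₀ := by
        have h2 : ∀ n, w n x • (p (u n) - p y₀) = w n x • p (u n) - w n x • p y₀ :=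
          fun n => smul_sub _ _ _
        rw [tsum_congr h2, Summable.tsum_sub (hterm_summ x) ((hw_summ x).smul_const (p y₀)),
          Summable.tsum_smul_const (hw_summ x) (p y₀)]
      rw [h1, smul_sub, smul_smul, inv_mul_cancel₀ (ne_of_gt hWx), one_smul]
    rw [key, norm_smul, Real.norm_eq_abs, abs_of_pos (inv_pos.mpr hWx)]
    apply mul_le_mul_of_nonneg_left ?_ (le_of_lt (inv_pos.mpr hWx))
    calc ‖∑' n, w n x • (p (u n) - p y₀)‖ ≤ ∑' n, ‖w n x • (p (u n) - p y₀)‖ := by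
          apply norm_tsum_le_tsum_norm
          apply hsummul.congr
          intro n
          rw [norm_smul, Real.norm_eq_abs, abs_of_nonneg (hw_nonneg n x)]
      _ = ∑' n, w n x * ‖p (u n) - p y₀‖ := by
          congr 1; funext n
          rw [norm_smul, Real.norm_eq_abs, abs_of_nonneg (hw_nonneg n x)]
  have hq_bound : ∀ x, ‖q x‖ ≤ 1 := by
    intro x
    by_cases hx : x ∈ Y
    · rw [hq]; simp only [hx, dif_pos]; exact hpb _
    · rw [hq]; simp only [hx, dif_neg, not_false_iff]
      have hWx := hW_pos x hx
      rw [norm_smul, Real.norm_eq_abs, abs_of_pos (inv_pos.mpr hWx)]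
      rw [inv_mul_le_iff₀ hWx, mul_one]
      calc ‖N x‖ ≤ ∑' n, ‖w n x • p (u n)‖ := by
            apply norm_tsum_le_tsum_norm
            exact hterm_norm_summ x
        _ ≤ ∑' n, w n x := by
            apply Summable.tsum_le_tsum ?_ (hterm_norm_summ x) (hw_summ x)
            intro n
            rw [norm_smul, Real.norm_eq_abs, abs_of_nonneg (hw_nonneg n x)]
            calc w n x * ‖p (u n)‖ ≤ w n x * 1 :=
                  mul_le_mul_of_nonneg_left (hpb _) (hw_nonneg n x)
              _ = w n x := mul_one _
        _ = W x := rfl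
  refine ⟨q, ?_, hq_ext, hq_bound⟩
  rw [continuous_iff_continuousAt]
  intro x₀
  by_cases hx₀ : x₀ ∈ Y
  · -- continuity at a point of Y
    rw [Metric.continuousAt_iff]
    intro ε hε
    set y₀ : Y := ⟨x₀, hx₀⟩ with hy₀
    obtain ⟨δ₁, hδ₁, hδ₁'⟩ := Metric.continuousAt_iff.mp hp.continuousAt (ε/2) (by linarith)
    refine ⟨δ₁/4, by linarith, fun {x} hxd => ?_⟩
    have hqx₀ : q x₀ = p y₀ := hq_ext y₀
    by_cases hx : x ∈ Y
    · have : q x = p ⟨x, hx⟩ := hq_ext ⟨x, hx⟩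
      rw [this, hqx₀]
      apply lt_trans (hδ₁' ?_) (by linarith)
      rw [Subtype.dist_eq]
      exact lt_of_lt_of_le hxd (by linarith)
    · rw [dist_eq_norm, hqx₀]
      have hb := hq_boundary x hx y₀
      have hWx := hW_pos x hx
      have hsummul : Summable (fun n => w n x * ‖p (u n) - p y₀‖) := by
        apply Summable.of_nonneg_of_le (fun n => mul_nonneg (hw_nonneg n x) (norm_nonneg _))
          (fun n => ?_) (hgeom.mul_left 2)
        calc w n x * ‖p (u n) - p y₀‖ ≤ w n x * 2 := by
              apply mul_le_mul_of_nonneg_left ?_ (hw_nonneg n x)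
              calc ‖p (u n) - p y₀‖ ≤ ‖p (u n)‖ + ‖p y₀‖ := norm_sub_le _ _
                _ ≤ 2 := by linarith [hpb (u n), hpb y₀]
          _ ≤ 2 * (2:ℝ)⁻¹^n := by
              rw [mul_comm]; exact mul_le_mul_of_nonneg_left (hw_le n x) (by norm_num)
      have hterm : ∀ n, w n x * ‖p (u n) - p y₀‖ ≤ w n x * (ε/2) := by
        intro n
        by_cases hn : w n x = 0
        · rw [hn, zero_mul, zero_mul]
        · apply mul_le_mul_of_nonneg_left ?_ (hw_nonneg n x)
          have hd := hclose x n hn x₀ hx₀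
          have : dist (u n) y₀ < δ₁ := by
            rw [Subtype.dist_eq]
            calc dist (u n : X) (y₀ : X) ≤ 3 * dist x x₀ := hd
              _ < δ₁ := by linarith
          have := hδ₁' this
          rw [dist_eq_norm] at this
          linarith
      calc ‖q x - p y₀‖ ≤ (W x)⁻¹ * ∑' n, w n x * ‖p (u n) - p y₀‖ := hb
        _ ≤ (W x)⁻¹ * ((ε/2) * W x) := by
            apply mul_le_mul_of_nonneg_left ?_ (le_of_lt (inv_pos.mpr hWx))
            calc ∑' n, w n x * ‖p (u n) - p y₀‖ ≤ ∑' n, w n x * (ε/2) :=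
                  Summable.tsum_le_tsum hterm hsummul ((hw_summ x).mul_right _)
              _ = (ε/2) * W x := by
                  rw [tsum_mul_right, mul_comm]
        _ = ε/2 := by field_simp
        _ < ε := by linarith
  · -- continuity off Y
    have hopen : Yᶜ ∈ nhds x₀ := hY.isOpen_compl.mem_nhds hx₀
    have hev : q =ᶠ[nhds x₀] fun x => (W x)⁻¹ • N x := by
      filter_upwards [hopen] with x hx
      rw [hq]
      exact dif_neg hx
    apply ContinuousAt.congr ?_ hev.symm
    exact ((hW_cont.continuousAt).inv₀ (ne_of_gt (hW_pos x₀ hx₀))).smul hN_cont.continuousAt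
end Extend

section Helpers
variable {A : Type*} [NonUnitalCStarAlgebra A]
local notation "B" => Unitization ℂ A

lemma proj_norm_le_one {e : A} (he : IsProjectionElem e) : ‖e‖ ≤ 1 := by
  have h := CStarRing.norm_star_mul_self (x := e)
  rw [he.1, he.2] at h
  nlinarith [norm_nonneg e]

lemma continuous_cfcn_projFun {W : Type*} [TopologicalSpace W] (g : W → A) (hg : Continuous g)
    (hsa : ∀ w, IsSelfAdjoint (g w)) (hb : ∀ w, ‖g w‖ ≤ 1) :
    Continuous fun w => cfcₙ projFun (g w) := by
  have key : Continuous fun w => ((cfcₙ projFun (g w) : A) : B) := by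
    have heq : ∀ w, ((cfcₙ projFun (g w) : A) : B) = cfc projFun ((g w : A) : B) := fun w =>
      Unitization.real_cfcₙ_eq_cfc_inr (g w) projFun projFun_zero
    simp only [heq]
    exact continuous_cfc_comp projFun projFun_continuous (fun w => ((g w : A) : B))
      ((Unitization.isometry_inr (𝕜 := ℂ) (A := A)).continuous.comp hg)
      (fun w => inr_selfAdjoint (hsa w)) 1 one_pos.le
      (fun w => by rw [Unitization.norm_inr]; exact hb w)
  rw [(Unitization.isometry_inr (𝕜 := ℂ) (A := A)).isEmbedding.isInducing.continuous_iff]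
  exact key
end Helpers


/-- A continuous projection-valued function on a closed subset `Y ⊆ X`, all of whose values
are mutually Murray–von Neumann equivalent, extends to a continuous projection-valued
function on an open set `U ⊇ Y`, all of whose values are mutually Murray–von Neumann
equivalent. -/
theorem stmt_10 {X : Type*} [TopologicalSpace X] [SecondCountableTopology X]
    [LocallyCompactSpace X] [T2Space X]
    {A : Type*} [NonUnitalCStarAlgebra A]
    (Y : Set X) (hY : IsClosed Y)
    (p : Y → A) (hp : Continuous p)
    (hproj : ∀ x : Y, IsProjectionElem (p x))
    (hMvN : ∀ x y : Y, MvNEquiv (p x) (p y)) :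
    ∃ (U : Set X) (_ : IsOpen U) (hYU : Y ⊆ U) (pt : U → A),
      Continuous pt ∧
      (∀ (x : X) (hx : x ∈ Y), pt ⟨x, hYU hx⟩ = p ⟨x, hx⟩) ∧
      (∀ x : U, IsProjectionElem (pt x)) ∧
      (∀ x y : U, MvNEquiv (pt x) (pt y)) := by
  classical
  rcases Y.eq_empty_or_nonempty with hYe | hne
  · refine ⟨∅, isOpen_empty, by rw [hYe], fun _ => 0, continuous_const, ?_, ?_, ?_⟩
    · intro x hx
      rw [hYe] at hx
      exact absurd hx (Set.notMem_empty x)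
    · rintro ⟨x, hx⟩
      exact absurd hx (Set.notMem_empty x)
    · rintro ⟨x, hx⟩
      exact absurd hx (Set.notMem_empty x)
  · letI : MetricSpace X := TopologicalSpace.metrizableSpaceMetric X
    haveI : Nonempty Y := hne.to_subtype
    have hpb : ∀ y, ‖p y‖ ≤ 1 := fun y => proj_norm_le_one (hproj y)
    obtain ⟨q, hqc, hqe, hqb⟩ := extend_from_closed Y hY hne p hp hpb
    set g : X → A := fun x => (2:ℝ)⁻¹ • (q x + star (q x)) with hg
    have hg_cont : Continuous g := ((hqc.add hqc.star).const_smul _)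
    have hg_sa : ∀ x, IsSelfAdjoint (g x) := fun x => by
      rw [hg]
      simp only [IsSelfAdjoint, star_smul, star_trivial, star_add, star_star]
      rw [add_comm]
    have hg_ext : ∀ y : Y, g y = p y := fun y => by
      rw [hg]
      simp only [hqe y, (hproj y).1]
      rw [← two_smul ℝ (p y), smul_smul]
      norm_num
    have hg_b : ∀ x, ‖g x‖ ≤ 1 := fun x => by
      rw [hg]
      simp only [norm_smul, Real.norm_eq_abs]
      calc |(2:ℝ)⁻¹| * ‖q x + star (q x)‖ ≤ |(2:ℝ)⁻¹| * (‖q x‖ + ‖star (q x)‖) := by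
            apply mul_le_mul_of_nonneg_left (norm_add_le _ _) (abs_nonneg _)
        _ ≤ 1 := by
            rw [norm_star]
            rw [abs_of_pos (by norm_num : (0:ℝ) < 2⁻¹)]
            linarith [hqb x]
    set U : Set X := {x | ‖g x * g x - g x‖ < 3/16} ∩ {x | infDist (g x) (Set.range p) < 8⁻¹}
      with hU
    have hUopen : IsOpen U := by
      apply IsOpen.inter
      · exact isOpen_lt (((hg_cont.mul hg_cont).sub hg_cont).norm) continuous_const
      · exact isOpen_lt ((continuous_infDist_pt _).comp hg_cont) continuous_const
    have hYU : Y ⊆ U := by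
      intro x hx
      constructor
      · show ‖g x * g x - g x‖ < 3/16
        rw [hg_ext ⟨x, hx⟩, (hproj ⟨x, hx⟩).2, sub_self, norm_zero]
        norm_num
      · show infDist (g x) (Set.range p) < 8⁻¹
        rw [hg_ext ⟨x, hx⟩]
        calc infDist (p ⟨x, hx⟩) (Set.range p) ≤ dist (p ⟨x, hx⟩) (p ⟨x, hx⟩) :=
              infDist_le_dist_of_mem ⟨⟨x, hx⟩, rfl⟩
          _ = 0 := dist_self _
          _ < 8⁻¹ := by norm_num
    set pt : U → A := fun x => cfcₙ projFun (g x.1) with hpt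
    have hnear : ∀ x : U, ‖g x.1 * g x.1 - g x.1‖ < 3/16 := fun x => x.2.1
    have hpt_proj : ∀ x : U, IsProjectionElem (pt x) := fun x =>
      (projFun_isProjection (hg_sa x.1) (hnear x)).1
    -- choose base point
    obtain ⟨y₀, hy₀⟩ := hne
    have hrange_ne : (Set.range p).Nonempty := ⟨p ⟨y₀, hy₀⟩, ⟨⟨y₀, hy₀⟩, rfl⟩⟩
    have hmvn_base : ∀ x : U, MvNEquiv (pt x) (p ⟨y₀, hy₀⟩) := by
      intro x
      obtain ⟨z, ⟨y', rfl⟩, hz⟩ := (infDist_lt_iff hrange_ne).mp x.2.2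
      have h1 : ‖pt x - g x.1‖ ≤ 1/4 := (projFun_isProjection (hg_sa x.1) (hnear x)).2
      have h2 : ‖g x.1 - p y'‖ < 8⁻¹ := by rwa [dist_eq_norm] at hz
      have hclose : ‖pt x - p y'‖ < 1 := by
        calc ‖pt x - p y'‖ ≤ ‖pt x - g x.1‖ + ‖g x.1 - p y'‖ := norm_sub_le_norm_sub_add_norm_sub _ _ _
          _ < 1 := by linarith
      exact MvNEquiv.trans (hpt_proj x).2 (hproj ⟨y₀, hy₀⟩).2
        (mvn_of_close (hpt_proj x) (hproj y') hclose) (hMvN y' ⟨y₀, hy₀⟩)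
    refine ⟨U, hUopen, hYU, pt, ?_, ?_, hpt_proj, ?_⟩
    · exact continuous_cfcn_projFun (fun x : U => g x.1) (hg_cont.comp continuous_subtype_val)
        (fun x => hg_sa x.1) (fun x => hg_b x.1)
    · intro x hx
      show cfcₙ projFun (g x) = p ⟨x, hx⟩
      rw [hg_ext ⟨x, hx⟩]
      exact projFun_fixes (hproj ⟨x, hx⟩)
    · intro x y
      exact MvNEquiv.trans (hpt_proj x).2 (hpt_proj y).2 (hmvn_base x)
        ((hmvn_base y).symm)
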